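/- For all n ≥ 1, the maximum value of mmp^{(1,0,0,0)} over up-down permutations of length 2n is 2n-1, and the number of up-down permutations of length 2n attaining this maximum equals the number of up-down permutations of length 2n-1. -/

import Mathlib

open Finset

/-- Number of indices `i` such that there exists `j > i` with `σ j > σ i`
    (the statistic mmp^{(1,0,0,0)}). -/
noncomputable def mmp1000 {n : ℕ} (σ : Equiv.Perm (Fin n)) : ℕ :=
  (Finset.univ.filter (fun i : Fin n => ∃ j : Fin n, i < j ∧ σ i < σ j)).card

/-- Number of indices `i` such that there exists `j < i` with `σ j > σ i`
    (the statistic mmp^{(0,1,0,0)}). -/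
noncomputable def mmp0100 {n : ℕ} (σ : Equiv.Perm (Fin n)) : ℕ :=
  (Finset.univ.filter (fun i : Fin n => ∃ j : Fin n, j < i ∧ σ i < σ j)).card

/-- Number of indices `i` such that there exists `j > i` with `σ j < σ i`
    (the statistic mmp^{(0,0,0,1)}). -/
noncomputable def mmp0001 {n : ℕ} (σ : Equiv.Perm (Fin n)) : ℕ :=
  (Finset.univ.filter (fun i : Fin n => ∃ j : Fin n, i < j ∧ σ j < σ i)).card

/-- σ is up-down: σ(1) < σ(2) > σ(3) < σ(4) > ⋯ (0-indexed: ascent at even indices). -/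
def IsUpDown {n : ℕ} (σ : Equiv.Perm (Fin n)) : Prop :=
  ∀ i : Fin n, ∀ h : (i : ℕ) + 1 < n,
    if (i : ℕ) % 2 = 0 then σ i < σ ⟨(i : ℕ) + 1, h⟩ else σ ⟨(i : ℕ) + 1, h⟩ < σ i

/-- σ is down-up: σ(1) > σ(2) < σ(3) > σ(4) < ⋯ (0-indexed: descent at even indices). -/
def IsDownUp {n : ℕ} (σ : Equiv.Perm (Fin n)) : Prop :=
  ∀ i : Fin n, ∀ h : (i : ℕ) + 1 < n,
    if (i : ℕ) % 2 = 0 then σ ⟨(i : ℕ) + 1, h⟩ < σ i else σ i < σ ⟨(i : ℕ) + 1, h⟩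

open scoped Classical in
/-- The set of up-down permutations of length `m`. -/
noncomputable def UDset (m : ℕ) : Finset (Equiv.Perm (Fin m)) :=
  Finset.univ.filter (fun σ => IsUpDown σ)

open scoped Classical in
/-- The set of down-up permutations of length `m`. -/
noncomputable def DUset (m : ℕ) : Finset (Equiv.Perm (Fin m)) :=
  Finset.univ.filter (fun σ => IsDownUp σ)

/-- The reverse of σ: σ^r(i) = σ(n+1-i). -/
def permReverse {n : ℕ} (σ : Equiv.Perm (Fin n)) : Equiv.Perm (Fin n) :=
  Fin.revPerm.trans σ

/-- The complement of σ: σ^c(i) = n+1-σ(i). -/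
def permComplement {n : ℕ} (σ : Equiv.Perm (Fin n)) : Equiv.Perm (Fin n) :=
  σ.trans Fin.revPerm

/-- A_{2n}(x) = Σ_{σ ∈ UD_{2n}} x^{mmp^{(1,0,0,0)}(σ)}. -/
noncomputable def Apoly (n : ℕ) (x : ℤ) : ℤ :=
  ∑ σ ∈ UDset (2 * n), x ^ mmp1000 σ

/-- B_{2n+1}(x) = Σ_{σ ∈ UD_{2n+1}} x^{mmp^{(1,0,0,0)}(σ)}. -/
noncomputable def Bpoly (n : ℕ) (x : ℤ) : ℤ :=
  ∑ σ ∈ UDset (2 * n + 1), x ^ mmp1000 σ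

/-- C_{2n}(x) = Σ_{σ ∈ DU_{2n}} x^{mmp^{(1,0,0,0)}(σ)}. -/
noncomputable def Cpoly (n : ℕ) (x : ℤ) : ℤ :=
  ∑ σ ∈ DUset (2 * n), x ^ mmp1000 σ

/-- D_{2n+1}(x) = Σ_{σ ∈ DU_{2n+1}} x^{mmp^{(1,0,0,0)}(σ)}. -/
noncomputable def Dpoly (n : ℕ) (x : ℤ) : ℤ :=
  ∑ σ ∈ DUset (2 * n + 1), x ^ mmp1000 σ

/-- Number of up-down permutations of length m. -/
noncomputable def udCount (m : ℕ) : ℕ := (UDset m).card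

/-- Number of down-up permutations of length m. -/
noncomputable def duCount (m : ℕ) : ℕ := (DUset m).card

open scoped Classical in
/-- |{σ ∈ UD_{2m} : mmp^{(1,0,0,0)}(σ) = c}|. -/
noncomputable def AcountEq (m c : ℕ) : ℕ :=
  ((UDset (2 * m)).filter (fun σ => mmp1000 σ = c)).card

open scoped Classical in
/-- |{σ ∈ DU_{2m+1} : mmp^{(1,0,0,0)}(σ) = c}|. -/
noncomputable def DcountEq (m c : ℕ) : ℕ :=
  ((DUset (2 * m + 1)).filter (fun σ => mmp1000 σ = c)).card

open scoped Classical in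
/-- |{σ ∈ UD_{2m+1} : mmp^{(1,0,0,0)}(σ) = c}|. -/
noncomputable def BcountEq (m c : ℕ) : ℕ :=
  ((UDset (2 * m + 1)).filter (fun σ => mmp1000 σ = c)).card

open scoped Classical in
/-- |{σ ∈ DU_{2m} : mmp^{(1,0,0,0)}(σ) = c}|. -/
noncomputable def CcountEq (m c : ℕ) : ℕ :=
  ((DUset (2 * m)).filter (fun σ => mmp1000 σ = c)).card

-- auxiliary lemmas


lemma mmp_le {m : ℕ} (σ : Equiv.Perm (Fin (m+1))) : mmp1000 σ ≤ m := by
  have hsub : (Finset.univ.filter (fun i : Fin (m+1) => ∃ j, i < j ∧ σ i < σ j)) ⊆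
      Finset.univ.erase (σ.symm (Fin.last m)) := by
    intro i hi
    simp only [mem_filter] at hi
    obtain ⟨-, j, hij, hσ⟩ := hi
    refine Finset.mem_erase.2 ⟨fun h => ?_, Finset.mem_univ _⟩
    subst h
    simp only [Equiv.apply_symm_apply] at hσ
    exact absurd hσ (not_lt.2 (Fin.le_last _))
  have := Finset.card_le_card hsub
  simpa [mmp1000, Finset.card_erase_of_mem] using this

lemma mmp_eq_iff {m : ℕ} (hm : 0 < m) (σ : Equiv.Perm (Fin (m+1))) :
    mmp1000 σ = m ↔ σ (Fin.last m) = Fin.last m := by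
  constructor
  · intro hc
    by_contra hne
    have hsymm : σ.symm (Fin.last m) ≠ Fin.last m := by
      intro h
      have := congr_arg σ h
      rw [Equiv.apply_symm_apply] at this
      exact hne this.symm
    have hsub : (Finset.univ.filter (fun i : Fin (m+1) => ∃ j, i < j ∧ σ i < σ j)) ⊆
        (Finset.univ.erase (σ.symm (Fin.last m))).erase (Fin.last m) := by
      intro i hi
      simp only [mem_filter] at hi
      obtain ⟨-, j, hij, hσ⟩ := hi
      refine Finset.mem_erase.2 ⟨fun h => ?_, Finset.mem_erase.2 ⟨fun h => ?_, Finset.mem_univ _⟩⟩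
      · subst h; exact absurd hij (not_lt.2 (Fin.le_last _))
      · subst h
        simp only [Equiv.apply_symm_apply] at hσ
        exact absurd hσ (not_lt.2 (Fin.le_last _))
    have hcard := Finset.card_le_card hsub
    have h1 : ((Finset.univ.erase (σ.symm (Fin.last m))).erase (Fin.last m)).card = m - 1 := by
      rw [Finset.card_erase_of_mem, Finset.card_erase_of_mem] <;>
        simp [Finset.mem_erase, hsymm.symm, hsymm]
    rw [h1] at hcard
    rw [mmp1000] at hc
    omega
  · intro hfix
    have : (Finset.univ.filter (fun i : Fin (m+1) => ∃ j, i < j ∧ σ i < σ j)) =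
        Finset.univ.erase (Fin.last m) := by
      ext i
      simp only [mem_filter, Finset.mem_erase, Finset.mem_univ, true_and, and_true]
      constructor
      · rintro ⟨j, hij, -⟩
        intro h; subst h; exact absurd hij (not_lt.2 (Fin.le_last _))
      · intro hne
        refine ⟨Fin.last m, ?_, ?_⟩
        · exact lt_of_le_of_ne (Fin.le_last _) hne
        · rw [hfix]
          exact lt_of_le_of_ne (Fin.le_last _) (fun h => hne (σ.injective (h.trans hfix.symm)))
    rw [mmp1000, this, Finset.card_erase_of_mem (Finset.mem_univ _)]
    simp

noncomputable def extLast {m : ℕ} (τ : Equiv.Perm (Fin m)) : Equiv.Perm (Fin (m+1)) :=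
  finSuccEquivLast.permCongr.symm τ.optionCongr

lemma extLast_castSucc {m : ℕ} (τ : Equiv.Perm (Fin m)) (i : Fin m) :
    extLast τ (Fin.castSucc i) = Fin.castSucc (τ i) := by
  simp [extLast, Equiv.permCongr_apply, finSuccEquivLast_castSucc]

lemma extLast_last {m : ℕ} (τ : Equiv.Perm (Fin m)) :
    extLast τ (Fin.last m) = Fin.last m := by
  simp [extLast, Equiv.permCongr_apply, finSuccEquivLast_last]

lemma extLast_apply {m : ℕ} (τ : Equiv.Perm (Fin m)) (i : Fin (m+1)) (hk : (i : ℕ) < m) :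
    extLast τ i = Fin.castSucc (τ ⟨(i : ℕ), hk⟩) := by
  have hi : i = Fin.castSucc ⟨(i : ℕ), hk⟩ := by ext; simp
  conv_lhs => rw [hi]
  exact extLast_castSucc τ _

lemma extLast_injective {m : ℕ} : Function.Injective (extLast (m := m)) := by
  intro a b h
  have : a.optionCongr = b.optionCongr := finSuccEquivLast.permCongr.symm.injective h
  have := congr_arg Equiv.removeNone this
  simpa using this

lemma extLast_surj {m : ℕ} (σ : Equiv.Perm (Fin (m+1))) (hσ : σ (Fin.last m) = Fin.last m) :
    ∃ τ, extLast τ = σ := by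
  set π : Equiv.Perm (Option (Fin m)) := finSuccEquivLast.permCongr σ with hπ
  have hnone : π none = none := by
    simp [hπ, Equiv.permCongr_apply, hσ, finSuccEquivLast_last]
  refine ⟨π.removeNone, ?_⟩
  have key : (π.removeNone).optionCongr = π := by
    refine Equiv.ext fun x => ?_
    cases x with
    | none =>
      rw [Equiv.optionCongr_apply, Option.map_none, hnone]
    | some a =>
      have h : ∃ x', π (some a) = some x' := by
        cases hx : π (some a) with
        | none =>
          exfalso
          have := π.injective (hx.trans hnone.symm)
          simp at this
        | some b => exact ⟨b, rfl⟩
      rw [Equiv.optionCongr_apply, Option.map_some]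
      exact Equiv.removeNone_some π h
  rw [extLast, key, hπ]
  exact Equiv.symm_apply_apply _ _

lemma isUpDown_extLast_iff {m : ℕ} (hm : m % 2 = 1) (τ : Equiv.Perm (Fin m)) :
    IsUpDown (extLast τ) ↔ IsUpDown τ := by
  constructor
  · intro h i hi
    have H := h (Fin.castSucc i) (by simpa using Nat.lt_succ_of_lt hi)
    rw [extLast_apply τ _ (by simpa using i.isLt),
        extLast_apply τ _ (by simpa using hi)] at H
    simp only [Fin.coe_castSucc, Fin.eta] at H
    split_ifs at H ⊢ with hp
    · exact Fin.castSucc_lt_castSucc_iff.1 H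
    · exact Fin.castSucc_lt_castSucc_iff.1 H
  · intro h i hi
    by_cases hcase : (i : ℕ) + 1 < m
    · have H := h ⟨(i : ℕ), by omega⟩ hcase
      rw [extLast_apply τ i (by omega), extLast_apply τ _ (by simpa using hcase)]
      simp only [Fin.val_mk] at H ⊢
      split_ifs at H ⊢ with hp
      · exact Fin.castSucc_lt_castSucc_iff.2 H
      · exact Fin.castSucc_lt_castSucc_iff.2 H
    · have hpar : (i : ℕ) % 2 = 0 := by omega
      have e2 : (⟨(i : ℕ) + 1, hi⟩ : Fin (m+1)) = Fin.last m := by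
        ext; simp; omega
      rw [e2]
      simp only [hpar, if_true, extLast_last]
      rw [extLast_apply τ i (by omega)]
      exact Fin.castSucc_lt_last _


def zig (n : ℕ) : Equiv.Perm (Fin (2*n)) where
  toFun i := if (i : ℕ) % 2 = 0 then ⟨(i : ℕ)/2, by have := i.isLt; omega⟩
             else ⟨n + (i : ℕ)/2, by have := i.isLt; omega⟩
  invFun j := if h : (j : ℕ) < n then ⟨2*(j : ℕ), by omega⟩
              else ⟨2*((j : ℕ)-n)+1, by have := j.isLt; omega⟩
  left_inv i := by
    have hi := i.isLt
    apply Fin.ext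
    dsimp only
    by_cases h : (i : ℕ) % 2 = 0
    · simp only [if_pos h]
      simp only [dif_pos (show ((⟨(i : ℕ)/2, by omega⟩ : Fin (2*n)) : ℕ) < n from by simp; omega)]
      omega
    · simp only [if_neg h]
      simp only [dif_neg (show ¬ ((⟨n + (i : ℕ)/2, by omega⟩ : Fin (2*n)) : ℕ) < n from by simp)]
      simp; omega
  right_inv j := by
    have hj := j.isLt
    apply Fin.ext
    dsimp only
    by_cases h : (j : ℕ) < n
    · simp only [dif_pos h]
      simp only [if_pos (show ((⟨2*(j : ℕ), by omega⟩ : Fin (2*n)) : ℕ) % 2 = 0 from by simp)]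
      simp
    · simp only [dif_neg h]
      simp only [if_neg (show ¬ ((⟨2*((j : ℕ)-n)+1, by have := j.isLt; omega⟩ : Fin (2*n)) : ℕ) % 2 = 0 from by simp)]
      omega

lemma zig_apply_even {n : ℕ} (i : Fin (2*n)) (h : (i : ℕ) % 2 = 0) :
    ((zig n i : Fin (2*n)) : ℕ) = (i : ℕ)/2 := by
  simp [zig, Equiv.coe_fn_mk, h]

lemma zig_apply_odd {n : ℕ} (i : Fin (2*n)) (h : (i : ℕ) % 2 = 1) :
    ((zig n i : Fin (2*n)) : ℕ) = n + (i : ℕ)/2 := by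
  rw [zig, Equiv.coe_fn_mk, if_neg (by omega)]

lemma zig_isUpDown (n : ℕ) : IsUpDown (zig n) := by
  intro i hi
  have hi2 := i.isLt
  by_cases h : (i : ℕ) % 2 = 0
  · rw [if_pos h, Fin.lt_def, zig_apply_even i h,
      zig_apply_odd ⟨(i : ℕ)+1, hi⟩ (by show ((i : ℕ)+1) % 2 = 1; omega)]
    show (i : ℕ)/2 < n + ((i : ℕ)+1)/2
    omega
  · rw [if_neg h, Fin.lt_def, zig_apply_odd i (by omega),
      zig_apply_even ⟨(i : ℕ)+1, hi⟩ (by show ((i : ℕ)+1) % 2 = 0; omega)]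
    show ((i : ℕ)+1)/2 < n + (i : ℕ)/2
    omega

lemma zig_last (m : ℕ) : zig (m+1) (Fin.last (2*m+1)) = Fin.last (2*m+1) := by
  apply Fin.ext
  rw [zig_apply_odd _ (by show (2*m+1) % 2 = 1; omega), Fin.val_last]
  show (m+1) + (2*m+1)/2 = 2*m+1
  omega


lemma count_eq_aux (m : ℕ)
    [DecidablePred (fun σ : Equiv.Perm (Fin (2*(m+1))) => mmp1000 σ = 2*m+1)] :
    ((UDset (2 * (m+1))).filter (fun σ => mmp1000 σ = 2*m+1)).card
      = (UDset (2*m+1)).card := by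
  classical
  have hmem : ∀ τ : Equiv.Perm (Fin (2*m+1)), τ ∈ UDset (2*m+1) →
      extLast τ ∈ (UDset (2 * (m+1))).filter (fun σ => mmp1000 σ = 2*m+1) := by
    intro τ hτ
    rw [UDset, Finset.mem_filter, Finset.mem_filter] at *
    refine ⟨⟨Finset.mem_univ _, ?_⟩, ?_⟩
    · exact (isUpDown_extLast_iff (by omega) τ).2 hτ.2
    · exact (mmp_eq_iff (m := 2*m+1) (by omega) (extLast τ)).2 (extLast_last τ)
  refine (Finset.card_bij (fun τ _ => extLast τ) hmem ?_ ?_).symm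
  · intro a ha b hb hab
    exact extLast_injective hab
  · intro σ hσ
    rw [Finset.mem_filter, UDset, Finset.mem_filter] at hσ
    obtain ⟨⟨-, hud⟩, hm1⟩ := hσ
    have hfix : σ (Fin.last (2*m+1)) = Fin.last (2*m+1) :=
      (mmp_eq_iff (m := 2*m+1) (by omega) σ).1 hm1
    obtain ⟨τ, hτ⟩ := extLast_surj σ hfix
    refine ⟨τ, ?_, hτ⟩
    rw [UDset, Finset.mem_filter]
    refine ⟨Finset.mem_univ _, ?_⟩
    exact (isUpDown_extLast_iff (by omega) τ).1 (hτ ▸ hud)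

theorem stmt12 (n : ℕ) (hn : 1 ≤ n) :
    (∀ σ ∈ UDset (2 * n), mmp1000 σ ≤ 2 * n - 1) ∧
    (∃ σ ∈ UDset (2 * n), mmp1000 σ = 2 * n - 1) ∧
    AcountEq n (2 * n - 1) = udCount (2 * n - 1) := by
  classical
  obtain ⟨m, rfl⟩ : ∃ m, n = m + 1 := ⟨n - 1, by omega⟩
  have hM : 2 * (m + 1) - 1 = 2 * m + 1 := by omega
  rw [hM]
  refine ⟨?_, ?_, ?_⟩
  · intro σ hσ
    exact mmp_le (m := 2*m+1) σ
  · refine ⟨zig (m+1), ?_, ?_⟩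
    · rw [UDset, Finset.mem_filter]
      exact ⟨Finset.mem_univ _, zig_isUpDown (m+1)⟩
    · exact (mmp_eq_iff (m := 2*m+1) (by omega) (zig (m+1))).2 (zig_last m)
  · rw [AcountEq, udCount]
    exact count_eq_aux m
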